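/- Let α > 1, β = 1/(4α+3), δ ∈ (0,1], and m₀ > 0. Let χ_R : ℝ → [0,1] be a smooth function with χ_R ≡ 1 on (−∞, 1/2] and χ_R ≡ 0 on [1, ∞), and let χ : ℝ → [0,1] be a smooth function with χ ≡ 0 on (−∞,1] and χ ≡ 1 on [2,∞). Define Θ₀(x) = x^{α−1/2} χ_R(x/δ) for x > 0 and Θ₀(x) = 0 for x ≤ 0; Θ₁ = −Θ₀''' − m₀⁴(Θ₀⁵)' on (0,∞); and Θ_♯(t,x) = Θ₀(x) + t χ(t^{−7β/6} x) Θ₁(x) for t ∈ (0,1], x > 0. Then for every j ∈ {0,1,2,3,4,5,6} there exists a constant C > 0 (depending on j, α, δ, m₀ and the cutoffs χ, χ_R) such that: (a) |Θ₁^{(j)}(x)| ≤ C x^{α−7/2−j} for all x ∈ (0,δ]; (b) for all t ∈ (0,1] and all x ∈ (0,δ] with x ≥ 2 t^{7β/6}, one has |∂ₓ^j Θ_♯(t,x)| ≤ C x^{α−1/2−j} and |∂ₓ^j ∂ₜ Θ_♯(t,x)| ≤ C x^{α−7/2−j}. -/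

import Mathlib

open Set Filter Topology

section Aux

variable {δ : ℝ} {χR : ℝ → ℝ}

/-- A grammar of functions: sums/products/scalar multiples of terms
`z ^ q * χR^{(m)}(z/δ)`, indexed by a lower bound on the power-law order. -/
inductive Elem (δ : ℝ) (χR : ℝ → ℝ) : ℝ → (ℝ → ℝ) → Prop
  | base (q : ℝ) (m : ℕ) : Elem δ χR q (fun z => z ^ q * iteratedDeriv m χR (z / δ))
  | smul (c : ℝ) {q : ℝ} {f : ℝ → ℝ} : Elem δ χR q f → Elem δ χR q (fun z => c * f z)
  | add {q : ℝ} {f g : ℝ → ℝ} : Elem δ χR q f → Elem δ χR q g →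
      Elem δ χR q (fun z => f z + g z)
  | mul {q₁ q₂ : ℝ} {f g : ℝ → ℝ} : Elem δ χR q₁ f → Elem δ χR q₂ g →
      Elem δ χR (q₁ + q₂) (fun z => f z * g z)
  | mono {q' q : ℝ} {f : ℝ → ℝ} : q' ≤ q → Elem δ χR q f → Elem δ χR q' f

lemma elem_deriv (hχR : ContDiff ℝ (⊤ : ℕ∞) χR) {q : ℝ} {f : ℝ → ℝ}
    (h : Elem δ χR q f) :
    ∃ g, Elem δ χR (q - 1) g ∧ ∀ x ∈ Ioi (0:ℝ), HasDerivAt f (g x) x := by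
  induction h with
  | base q m =>
    refine ⟨fun z => q * (z ^ (q - 1) * iteratedDeriv m χR (z / δ)) +
        (1 / δ) * (z ^ q * iteratedDeriv (m + 1) χR (z / δ)), ?_, ?_⟩
    · exact (Elem.smul q (Elem.base (q - 1) m)).add
        (Elem.smul (1 / δ) (Elem.mono (by linarith) (Elem.base q (m + 1))))
    · intro x hx
      have h1 : HasDerivAt (fun z : ℝ => z ^ q) (q * x ^ (q - 1)) x :=
        Real.hasDerivAt_rpow_const (Or.inl (ne_of_gt hx))
      have hdiff : DifferentiableAt ℝ (iteratedDeriv m χR) (x / δ) := by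
        have := hχR.differentiable_iteratedDeriv m (by exact_mod_cast lt_top_iff_ne_top.2 (by simp))
        exact this.differentiableAt
      have hout : HasDerivAt (iteratedDeriv m χR)
          (iteratedDeriv (m + 1) χR (x / δ)) (x / δ) := by
        rw [iteratedDeriv_succ]; exact hdiff.hasDerivAt
      have hin : HasDerivAt (fun z : ℝ => z / δ) (1 / δ) x := by
        simpa using (hasDerivAt_id x).div_const δ
      have h2 : HasDerivAt (fun z : ℝ => iteratedDeriv m χR (z / δ))
          (iteratedDeriv (m + 1) χR (x / δ) * (1 / δ)) x := by have := hout.comp x hin; exact this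
      have : HasDerivAt (fun z => z ^ q * iteratedDeriv m χR (z / δ)) _ x := h1.mul h2
      convert this using 1
      ring
  | smul c h ih =>
    obtain ⟨g, hg, hd⟩ := ih
    exact ⟨fun z => c * g z, Elem.smul c hg, fun x hx => (hd x hx).const_mul c⟩
  | add h₁ h₂ ih₁ ih₂ =>
    obtain ⟨g₁, hg₁, hd₁⟩ := ih₁
    obtain ⟨g₂, hg₂, hd₂⟩ := ih₂
    exact ⟨fun z => g₁ z + g₂ z, hg₁.add hg₂, fun x hx => (hd₁ x hx).add (hd₂ x hx)⟩
  | @mul q₁ q₂ f₁ f₂ h₁ h₂ ih₁ ih₂ =>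
    obtain ⟨g₁, hg₁, hd₁⟩ := ih₁
    obtain ⟨g₂, hg₂, hd₂⟩ := ih₂
    refine ⟨fun z => g₁ z * f₂ z + f₁ z * g₂ z, ?_, fun x hx => (hd₁ x hx).mul (hd₂ x hx)⟩
    exact (Elem.mono (le_of_eq (by ring)) (hg₁.mul h₂)).add
      (Elem.mono (le_of_eq (by ring)) (h₁.mul hg₂))
  | mono hle h ih =>
    obtain ⟨g, hg, hd⟩ := ih
    exact ⟨g, Elem.mono (by linarith) hg, hd⟩

lemma elem_bound (hM : ∀ m : ℕ, ∃ M > (0:ℝ), ∀ y : ℝ, |iteratedDeriv m χR y| ≤ M)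
    {q : ℝ} {f : ℝ → ℝ} (h : Elem δ χR q f) :
    ∃ C > (0:ℝ), ∀ x ∈ Ioc (0:ℝ) 2, |f x| ≤ C * x ^ q := by
  induction h with
  | base q m =>
    obtain ⟨M, hM0, hMb⟩ := hM m
    refine ⟨M, hM0, fun x hx => ?_⟩
    rw [abs_mul, abs_of_nonneg (Real.rpow_nonneg hx.1.le q), mul_comm M _]
    exact mul_le_mul_of_nonneg_left (hMb _) (Real.rpow_nonneg hx.1.le q)
  | @smul c q f h ih =>
    obtain ⟨C, hC0, hCb⟩ := ih
    refine ⟨(|c| + 1) * C, by positivity, fun x hx => ?_⟩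
    have h1 := hCb x hx
    have hx0 : (0:ℝ) ≤ x ^ q := Real.rpow_nonneg hx.1.le q
    rw [abs_mul]
    calc |c| * |f x| ≤ |c| * (C * x ^ q) := mul_le_mul_of_nonneg_left h1 (abs_nonneg c)
      _ ≤ (|c| + 1) * C * x ^ q := by nlinarith [abs_nonneg c]
  | @add q f g h₁ h₂ ih₁ ih₂ =>
    obtain ⟨C₁, hC₁0, hC₁b⟩ := ih₁
    obtain ⟨C₂, hC₂0, hC₂b⟩ := ih₂
    refine ⟨C₁ + C₂, by positivity, fun x hx => ?_⟩
    calc |f x + g x| ≤ |f x| + |g x| := abs_add_le _ _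
      _ ≤ C₁ * x ^ q + C₂ * x ^ q := add_le_add (hC₁b x hx) (hC₂b x hx)
      _ = (C₁ + C₂) * x ^ q := by ring
  | @mul q₁ q₂ f₁ f₂ h₁ h₂ ih₁ ih₂ =>
    obtain ⟨C₁, hC₁0, hC₁b⟩ := ih₁
    obtain ⟨C₂, hC₂0, hC₂b⟩ := ih₂
    refine ⟨C₁ * C₂, mul_pos hC₁0 hC₂0, fun x hx => ?_⟩
    rw [Real.rpow_add hx.1, abs_mul]
    calc |f₁ x| * |f₂ x| ≤ (C₁ * x ^ q₁) * (C₂ * x ^ q₂) :=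
          mul_le_mul (hC₁b x hx) (hC₂b x hx) (abs_nonneg _)
            (mul_nonneg hC₁0.le (Real.rpow_nonneg hx.1.le _))
      _ = C₁ * C₂ * (x ^ q₁ * x ^ q₂) := by ring
  | @mono q' q f hle h ih =>
    obtain ⟨C, hC0, hCb⟩ := ih
    refine ⟨C * 2 ^ (q - q'), mul_pos hC0 (Real.rpow_pos_of_pos two_pos _), fun x hx => ?_⟩
    have hx0 := hx.1
    have key : x ^ q ≤ 2 ^ (q - q') * x ^ q' := by
      have hsplit : x ^ q = x ^ (q - q') * x ^ q' := by
        rw [← Real.rpow_add hx0]; ring_nf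
      rw [hsplit]
      exact mul_le_mul_of_nonneg_right
        (Real.rpow_le_rpow hx0.le hx.2 (by linarith)) (Real.rpow_nonneg hx0.le q')
    calc |f x| ≤ C * x ^ q := hCb x hx
      _ ≤ C * (2 ^ (q - q') * x ^ q') := mul_le_mul_of_nonneg_left key hC0.le
      _ = C * 2 ^ (q - q') * x ^ q' := by ring

lemma elem_contDiffOn (hχR : ContDiff ℝ (⊤ : ℕ∞) χR) :
    ∀ (n : ℕ) {q : ℝ} {f : ℝ → ℝ}, Elem δ χR q f → ContDiffOn ℝ n f (Ioi 0) := by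
  intro n
  induction n with
  | zero =>
    intro q f h
    obtain ⟨g, _, hd⟩ := elem_deriv hχR h
    rw [show ((0:ℕ) : WithTop ℕ∞) = 0 by norm_cast, contDiffOn_zero]
    exact fun x hx => ((hd x hx).differentiableAt.continuousAt).continuousWithinAt
  | succ n ih =>
    intro q f h
    obtain ⟨g, hg, hd⟩ := elem_deriv hχR h
    rw [show ((n + 1 : ℕ) : WithTop ℕ∞) = (n : WithTop ℕ∞) + 1 by norm_cast,
      contDiffOn_succ_iff_deriv_of_isOpen isOpen_Ioi]
    refine ⟨fun x hx => (hd x hx).differentiableAt.differentiableWithinAt, ?_, ?_⟩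
    · intro hcon
      exact absurd hcon (by simp)
    · exact (ih hg).congr (fun x hx => (hd x hx).deriv)

lemma elem_master (hχR : ContDiff ℝ (⊤ : ℕ∞) χR) {qF qG : ℝ} {F G : ℝ → ℝ}
    (hF : Elem δ χR qF F) (hG : Elem δ χR qG G) (k : ℕ) :
    ∃ Fk Gk, Elem δ χR (qF - k) Fk ∧ Elem δ χR (qG - k) Gk ∧
      ∀ (c₁ c₂ : ℝ) (f : ℝ → ℝ) (U : Set ℝ), IsOpen U → U ⊆ Ioi 0 →
        (∀ x ∈ U, f x = c₁ * F x + c₂ * G x) →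
        ∀ x ∈ U, iteratedDeriv k f x = c₁ * Fk x + c₂ * Gk x := by
  induction k with
  | zero =>
    refine ⟨F, G, by simpa using hF, by simpa using hG, ?_⟩
    intro c₁ c₂ f U hU hU0 hf x hx
    simpa [iteratedDeriv_zero] using hf x hx
  | succ k ih =>
    obtain ⟨Fk, Gk, hFk, hGk, hprop⟩ := ih
    obtain ⟨Fk', hFk', hFd⟩ := elem_deriv hχR hFk
    obtain ⟨Gk', hGk', hGd⟩ := elem_deriv hχR hGk
    refine ⟨Fk', Gk', Elem.mono (le_of_eq (by push_cast; ring)) hFk',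
      Elem.mono (le_of_eq (by push_cast; ring)) hGk', ?_⟩
    intro c₁ c₂ f U hU hU0 hf x hx
    have hev : iteratedDeriv k f =ᶠ[𝓝 x] fun y => c₁ * Fk y + c₂ * Gk y := by
      filter_upwards [hU.mem_nhds hx] with y hy
      exact hprop c₁ c₂ f U hU hU0 hf y hy
    rw [iteratedDeriv_succ, hev.deriv_eq]
    exact (((hFd x (hU0 hx)).const_mul c₁).add ((hGd x (hU0 hx)).const_mul c₂)).deriv

lemma iteratedDeriv_const_fun (m : ℕ) (a : ℝ) :
    iteratedDeriv m (fun _ : ℝ => a) = fun _ => if m = 0 then a else 0 := by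
  induction m with
  | zero => simp [iteratedDeriv_zero]
  | succ k ih =>
    rw [iteratedDeriv_succ, ih]
    cases k <;> simp

lemma cutoff_bound {g : ℝ → ℝ} (hg : ContDiff ℝ (⊤ : ℕ∞) g) {lo hi a b : ℝ}
    (ha : |a| ≤ 1) (hb : |b| ≤ 1)
    (hlo : ∀ y : ℝ, y ≤ lo → g y = a) (hhi : ∀ y : ℝ, hi ≤ y → g y = b) (m : ℕ) :
    ∃ M > (0:ℝ), ∀ y : ℝ, |iteratedDeriv m g y| ≤ M := by
  have hcont : Continuous (iteratedDeriv m g) :=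
    hg.continuous_iteratedDeriv m (by exact_mod_cast le_top)
  obtain ⟨M₀, hM₀⟩ := (isCompact_Icc (a := lo) (b := hi)).exists_bound_of_continuousOn
    hcont.continuousOn
  refine ⟨max M₀ 1, lt_of_lt_of_le one_pos (le_max_right _ _), fun y => ?_⟩
  rcases lt_or_ge y lo with h1 | h1
  · have : iteratedDeriv m g y = iteratedDeriv m (fun _ => a) y := by
      apply Filter.EventuallyEq.iteratedDeriv_eq
      filter_upwards [Iio_mem_nhds h1] with z hz
      exact hlo z hz.le
    rw [this, iteratedDeriv_const_fun]
    rcases Nat.eq_zero_or_pos m with hm | hm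
    · simp only [hm, if_pos rfl]
      exact le_trans ha (le_max_right _ _)
    · simp only [Nat.pos_iff_ne_zero.mp hm, if_false]
      simpa using le_trans zero_le_one (le_max_right M₀ 1)
  · rcases le_or_gt y hi with h2 | h2
    · have := hM₀ y ⟨h1, h2⟩
      rw [Real.norm_eq_abs] at this
      exact le_trans this (le_max_left _ _)
    · have : iteratedDeriv m g y = iteratedDeriv m (fun _ => b) y := by
        apply Filter.EventuallyEq.iteratedDeriv_eq
        filter_upwards [Ioi_mem_nhds h2] with z hz
        exact hhi z hz.le
      rw [this, iteratedDeriv_const_fun]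
      rcases Nat.eq_zero_or_pos m with hm | hm
      · simp only [hm, if_pos rfl]
        exact le_trans hb (le_max_right _ _)
      · simp only [Nat.pos_iff_ne_zero.mp hm, if_false]
        simpa using le_trans zero_le_one (le_max_right M₀ 1)

lemma iteratedDeriv_eqOn_within {f W : ℝ → ℝ} (hfW : ∀ z ∈ Ioi (0:ℝ), f z = W z) (j : ℕ) :
    ∀ z ∈ Ioi (0:ℝ), iteratedDeriv j f z = iteratedDerivWithin j W (Ioi 0) z := by
  induction j with
  | zero =>
    intro z hz
    simpa [iteratedDeriv_zero, iteratedDerivWithin_zero] using hfW z hz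
  | succ k ih =>
    intro z hz
    rw [iteratedDeriv_succ, iteratedDerivWithin_succ,
      derivWithin_of_isOpen isOpen_Ioi hz]
    apply Filter.EventuallyEq.deriv_eq
    filter_upwards [isOpen_Ioi.mem_nhds hz] with y hy
    exact ih y hy

end Aux

/-- Bounds on `Θ₁ = −Θ₀''' − m₀⁴(Θ₀⁵)'` and on the approximate solution
`Θ_♯(t,x) = Θ₀(x) + t χ(t^{−7β/6}x) Θ₁(x)` and its time derivative. -/
theorem stmt_9 (α β δ m₀ : ℝ) (hα : 1 < α) (hβ : β = 1 / (4 * α + 3))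
    (hδ : δ ∈ Ioc (0:ℝ) 1) (hm₀ : 0 < m₀)
    (χR : ℝ → ℝ) (hχR : ContDiff ℝ (⊤ : ℕ∞) χR)
    (hχR01 : ∀ x : ℝ, χR x ∈ Icc (0:ℝ) 1)
    (hχR1 : ∀ x : ℝ, x ≤ 1/2 → χR x = 1)
    (hχR0 : ∀ x : ℝ, 1 ≤ x → χR x = 0)
    (χ : ℝ → ℝ) (hχ : ContDiff ℝ (⊤ : ℕ∞) χ)
    (hχ01 : ∀ x : ℝ, χ x ∈ Icc (0:ℝ) 1)
    (hχlow : ∀ x : ℝ, x ≤ 1 → χ x = 0)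
    (hχhigh : ∀ x : ℝ, 2 ≤ x → χ x = 1)
    (Θ₀ Θ₁ : ℝ → ℝ) (Θs : ℝ → ℝ → ℝ)
    (hΘ₀ : Θ₀ = fun x : ℝ => if 0 < x then x ^ (α - 1/2) * χR (x / δ) else 0)
    (hΘ₁ : ∀ x : ℝ, 0 < x →
      Θ₁ x = -(iteratedDeriv 3 Θ₀ x) - m₀ ^ 4 * deriv (fun z : ℝ => Θ₀ z ^ 5) x)
    (hΘs : ∀ t : ℝ, 0 < t → ∀ x : ℝ, 0 < x →
      Θs t x = Θ₀ x + t * χ (t ^ (-(7 * β / 6)) * x) * Θ₁ x) :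
    ∀ j : ℕ, j ≤ 6 → ∃ C > (0:ℝ),
      (∀ x ∈ Ioc (0:ℝ) δ, |iteratedDeriv j Θ₁ x| ≤ C * x ^ (α - 7/2 - (j : ℝ))) ∧
      (∀ t ∈ Ioc (0:ℝ) 1, ∀ x ∈ Ioc (0:ℝ) δ, 2 * t ^ (7 * β / 6) ≤ x →
        |iteratedDeriv j (Θs t) x| ≤ C * x ^ (α - 1/2 - (j : ℝ)) ∧
        |iteratedDeriv j (fun z : ℝ => deriv (fun s : ℝ => Θs s z) t) x|
          ≤ C * x ^ (α - 7/2 - (j : ℝ))) := by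
  intro j _
  obtain ⟨hδ0, hδ1⟩ := hδ
  have hβ0 : 0 < β := by
    rw [hβ]; have : (0:ℝ) < 4 * α + 3 := by linarith
    positivity
  have hβ7 : 7 * β / 2 < 1 := by
    have hβlt : β < 1 / 7 := by
      rw [hβ, div_lt_div_iff₀ (by linarith) (by norm_num)]
      linarith
    linarith
  -- bounds on derivatives of cutoffs
  have hMχR : ∀ m : ℕ, ∃ M > (0:ℝ), ∀ y : ℝ, |iteratedDeriv m χR y| ≤ M :=
    fun m => cutoff_bound hχR (by norm_num) (by norm_num)
      (fun y hy => hχR1 y hy) (fun y hy => hχR0 y hy) m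
  -- the base profile
  set A : ℝ → ℝ := fun z => z ^ (α - 1/2) * χR (z / δ) with hAdef
  have hA : Elem δ χR (α - 1/2) A := by
    rw [hAdef]
    have := Elem.base (δ := δ) (χR := χR) (α - 1/2) 0
    simp only [iteratedDeriv_zero] at this
    exact this
  have hΘ₀A : ∀ z ∈ Ioi (0:ℝ), Θ₀ z = A z := by
    intro z hz
    rw [hΘ₀]
    simp only [if_pos (show (0:ℝ) < z from hz), hAdef]
  have hA5 : Elem δ χR (5 * (α - 1/2)) (fun z => A z ^ 5) := by
    have h : Elem δ χR ((α - 1/2) + (α - 1/2) + (α - 1/2) + (α - 1/2) + (α - 1/2))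
        (fun z => A z * A z * A z * A z * A z) :=
      (((hA.mul hA).mul hA).mul hA).mul hA
    have h2 : (fun z => A z * A z * A z * A z * A z) = (fun z => A z ^ 5) := by
      funext z; ring
    rw [h2] at h
    exact Elem.mono (le_of_eq (by ring)) h
  -- third derivative of Θ₀ and derivative of Θ₀^5
  obtain ⟨A₃, A₃', hA₃E, _, h3prop⟩ := elem_master hχR hA hA 3
  obtain ⟨P₁, P₁', hP₁E, _, h1prop⟩ := elem_master hχR hA5 hA5 1
  -- Θ₁ representation
  set G₁ : ℝ → ℝ := fun z => (-1) * A₃ z + (-(m₀ ^ 4)) * P₁ z with hG₁def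
  have hG₁ : Elem δ χR (α - 7/2) G₁ := by
    have e₁ : Elem δ χR (α - 7/2) (fun z => (-1 : ℝ) * A₃ z) :=
      Elem.smul (-1) (Elem.mono (le_of_eq (by push_cast; ring)) hA₃E)
    have e₂ : Elem δ χR (α - 7/2) (fun z => (-(m₀ ^ 4)) * P₁ z) :=
      Elem.smul _ (Elem.mono (by push_cast; linarith) hP₁E)
    exact e₁.add e₂
  have hΘ₁G₁ : ∀ z ∈ Ioi (0:ℝ), Θ₁ z = G₁ z := by
    intro z hz
    rw [hΘ₁ z hz]
    have h3 : iteratedDeriv 3 Θ₀ z = 1 * A₃ z + 0 * A₃' z :=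
      h3prop 1 0 Θ₀ (Ioi 0) isOpen_Ioi subset_rfl
        (fun x hx => by rw [hΘ₀A x hx]; ring) z hz
    have h1 : deriv (fun z : ℝ => Θ₀ z ^ 5) z = 1 * P₁ z + 0 * P₁' z := by
      rw [← iteratedDeriv_one]
      exact h1prop 1 0 _ (Ioi 0) isOpen_Ioi subset_rfl
        (fun x hx => by simp only [hΘ₀A x hx]; ring) z hz
    rw [h3, h1, hG₁def]
    ring
  -- level-j representation and bounds
  obtain ⟨Fj, Gj, hFjE, hGjE, hjprop⟩ := elem_master hχR hA hG₁ j
  obtain ⟨CA, hCA0, hCAb⟩ := elem_bound hMχR hFjE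
  obtain ⟨CG, hCG0, hCGb⟩ := elem_bound hMχR hGjE
  refine ⟨CA + CG, by positivity, ?_, ?_⟩
  · -- part (a)
    intro x hx
    have hxI : x ∈ Ioi (0:ℝ) := hx.1
    have heq : iteratedDeriv j Θ₁ x = 0 * Fj x + 1 * Gj x :=
      hjprop 0 1 Θ₁ (Ioi 0) isOpen_Ioi subset_rfl
        (fun z hz => by rw [hΘ₁G₁ z hz]; ring) x hxI
    rw [heq]
    have hb := hCGb x ⟨hx.1, le_trans hx.2 (by linarith)⟩
    have : |0 * Fj x + 1 * Gj x| = |Gj x| := by norm_num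
    rw [this]
    refine le_trans hb ?_
    exact mul_le_mul_of_nonneg_right (by linarith) (Real.rpow_nonneg hx.1.le _)
  · -- part (b)
    intro t ht x hx hxt
    obtain ⟨ht0, ht1⟩ := ht
    set τ : ℝ := t ^ (7 * β / 6) with hτdef
    have hτ0 : 0 < τ := Real.rpow_pos_of_pos ht0 _
    have hcinv : t ^ (-(7 * β / 6)) = τ⁻¹ := Real.rpow_neg ht0.le _
    have hx0 : (0:ℝ) < x := hx.1
    -- smallness of t relative to the region
    have hsmall : ∀ z : ℝ, 2 * τ ≤ z → t * z ^ (-3 : ℝ) ≤ 1/8 := by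
      intro z hz
      have hz0 : 0 < z := lt_of_lt_of_le (by positivity) hz
      have h1 : z ^ (-3:ℝ) ≤ (2*τ) ^ (-3:ℝ) :=
        Real.rpow_le_rpow_of_nonpos (by positivity) hz (by norm_num)
      have h2 : (2*τ) ^ (-3:ℝ) = (1/8) * t ^ (-(7*β/2)) := by
        rw [Real.mul_rpow (by norm_num) hτ0.le, hτdef, ← Real.rpow_mul ht0.le]
        have e1 : (2:ℝ) ^ (-3:ℝ) = 1/8 := by
          rw [show (-3:ℝ) = -(3:ℕ) by norm_num, Real.rpow_neg (by norm_num),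
            Real.rpow_natCast]
          norm_num
        have e2 : 7 * β / 6 * (-3) = -(7*β/2) := by ring
        rw [e1, e2]
      have h3 : t * ((1/8) * t ^ (-(7*β/2))) = (1/8) * t ^ (1 - 7*β/2) := by
        rw [show (1 - 7*β/2) = 1 + -(7*β/2) by ring, Real.rpow_add ht0,
          Real.rpow_one]
        ring
      have h4 : t ^ (1 - 7*β/2) ≤ 1 :=
        Real.rpow_le_one ht0.le ht1 (by linarith)
      calc t * z ^ (-3:ℝ) ≤ t * ((2*τ) ^ (-3:ℝ)) :=
            mul_le_mul_of_nonneg_left h1 ht0.le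
        _ = (1/8) * t ^ (1 - 7*β/2) := by rw [h2, h3]
        _ ≤ 1/8 := by nlinarith
    -- the region
    have hUsub : Ioi (2*τ) ⊆ Ioi (0:ℝ) := fun z hz => lt_trans (by positivity : (0:ℝ) < 2*τ) hz
    have hχone : ∀ z ∈ Ioi (2*τ), χ (t ^ (-(7 * β / 6)) * z) = 1 := by
      intro z hz
      apply hχhigh
      rw [hcinv, inv_mul_eq_div, le_div_iff₀ hτ0]
      have : 2*τ < z := hz
      linarith
    have hΘsEq : ∀ z ∈ Ioi (2*τ), Θs t z = 1 * A z + t * G₁ z := by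
      intro z hz
      have hz0 := hUsub hz
      rw [hΘs t ht0 z hz0, hχone z hz, hΘ₀A z hz0, hΘ₁G₁ z hz0]
      ring
    -- time derivative of Θs
    have hψval : ∀ z : ℝ, 0 < z → HasDerivAt (fun s => Θs s z)
        ((1 * χ (t ^ (-(7*β/6)) * z) + t * (deriv χ (t ^ (-(7*β/6)) * z) *
          (-(7*β/6) * t ^ (-(7*β/6) - 1) * z))) * Θ₁ z + 0) t := by
      intro z hz
      have hev : (fun s : ℝ => Θ₀ z + s * χ (s ^ (-(7*β/6)) * z) * Θ₁ z)
          =ᶠ[𝓝 t] (fun s => Θs s z) := by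
        filter_upwards [Ioi_mem_nhds ht0] with s hs
        rw [hΘs s hs z hz]
      have hp : HasDerivAt (fun s : ℝ => s ^ (-(7*β/6)))
          (-(7*β/6) * t ^ (-(7*β/6) - 1)) t :=
        Real.hasDerivAt_rpow_const (Or.inl ht0.ne')
      have hm : HasDerivAt (fun s : ℝ => s ^ (-(7*β/6)) * z)
          (-(7*β/6) * t ^ (-(7*β/6) - 1) * z) t := hp.mul_const z
      have hχd : HasDerivAt χ (deriv χ (t ^ (-(7*β/6)) * z)) (t ^ (-(7*β/6)) * z) :=
        ((hχ.differentiable (by simp)) _).hasDerivAt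
      have hcomp : HasDerivAt (fun s : ℝ => χ (s ^ (-(7*β/6)) * z))
          (deriv χ (t ^ (-(7*β/6)) * z) * (-(7*β/6) * t ^ (-(7*β/6) - 1) * z)) t :=
        hχd.comp t hm
      have hmul : HasDerivAt (fun s : ℝ => s * χ (s ^ (-(7*β/6)) * z))
          (1 * χ (t ^ (-(7*β/6)) * z) + t * (deriv χ (t ^ (-(7*β/6)) * z) *
            (-(7*β/6) * t ^ (-(7*β/6) - 1) * z))) t :=
        (hasDerivAt_id t).mul hcomp
      have htotal := (hmul.mul_const (Θ₁ z)).const_add (Θ₀ z)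
      have := htotal.congr_of_eventuallyEq hev.symm
      simpa using this
    set ψ : ℝ → ℝ := fun z => deriv (fun s : ℝ => Θs s z) t with hψdef
    set Ψ : ℝ → ℝ := fun w => (1 * χ (t ^ (-(7*β/6)) * w) + t * (deriv χ (t ^ (-(7*β/6)) * w) *
          (-(7*β/6) * t ^ (-(7*β/6) - 1) * w))) * G₁ w with hΨdef
    have hψΨ : ∀ z ∈ Ioi (0:ℝ), ψ z = Ψ z := by
      intro z hz
      show deriv (fun s : ℝ => Θs s z) t = Ψ z
      rw [(hψval z hz).deriv, hΘ₁G₁ z hz]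
      simp only [hΨdef]
      ring
    have hψG₁ : ∀ z ∈ Ioi (2*τ), ψ z = 0 * A z + 1 * G₁ z := by
      intro z hz
      have hz0 := hUsub hz
      have harg : (2:ℝ) < t ^ (-(7*β/6)) * z := by
        rw [hcinv, inv_mul_eq_div, lt_div_iff₀ hτ0]
        have : 2*τ < z := hz
        linarith
      have hd0 : deriv χ (t ^ (-(7*β/6)) * z) = 0 := by
        have hev : χ =ᶠ[𝓝 (t ^ (-(7*β/6)) * z)] (fun _ => 1) := by
          filter_upwards [Ioi_mem_nhds harg] with y hy
          exact hχhigh y hy.le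
        rw [hev.deriv_eq]
        exact deriv_const _ _
      rw [hψΨ z hz0]
      simp only [hΨdef]
      rw [hd0, hχhigh _ harg.le]
      ring
    -- level-j equalities on the region
    have hb1eq : ∀ z ∈ Ioi (2*τ), iteratedDeriv j (Θs t) z = 1 * Fj z + t * Gj z :=
      hjprop 1 t (Θs t) (Ioi (2*τ)) isOpen_Ioi hUsub hΘsEq
    have hb2eq : ∀ z ∈ Ioi (2*τ), iteratedDeriv j ψ z = 0 * Fj z + 1 * Gj z :=
      hjprop 0 1 ψ (Ioi (2*τ)) isOpen_Ioi hUsub hψG₁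
    -- interior bounds
    have hb1int : ∀ z : ℝ, 2*τ < z → z ∈ Ioc (0:ℝ) 2 →
        |iteratedDeriv j (Θs t) z| ≤ (CA + CG) * z ^ (α - 1/2 - (j:ℝ)) := by
      intro z hzτ hz2
      rw [hb1eq z hzτ, one_mul]
      have h1 : |Fj z| ≤ CA * z ^ (α - 1/2 - (j:ℝ)) := hCAb z hz2
      have h2 : |Gj z| ≤ CG * z ^ (α - 7/2 - (j:ℝ)) := hCGb z hz2
      have hzp : (0:ℝ) < z := hz2.1
      have hsplit : z ^ (α - 7/2 - (j:ℝ)) = z ^ (α - 1/2 - (j:ℝ)) * z ^ (-3:ℝ) := by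
        rw [← Real.rpow_add hzp]; ring_nf
      have h3 : t * z ^ (α - 7/2 - (j:ℝ)) ≤ (1/8) * z ^ (α - 1/2 - (j:ℝ)) := by
        rw [hsplit]
        have hs := hsmall z hzτ.le
        have hP : (0:ℝ) ≤ z ^ (α - 1/2 - (j:ℝ)) := Real.rpow_nonneg hzp.le _
        calc t * (z ^ (α - 1/2 - (j:ℝ)) * z ^ (-3:ℝ))
            = (t * z ^ (-3:ℝ)) * z ^ (α - 1/2 - (j:ℝ)) := by ring
          _ ≤ (1/8) * z ^ (α - 1/2 - (j:ℝ)) := mul_le_mul_of_nonneg_right hs hP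
      have hP : (0:ℝ) ≤ z ^ (α - 1/2 - (j:ℝ)) := Real.rpow_nonneg hzp.le _
      calc |Fj z + t * Gj z| ≤ |Fj z| + |t * Gj z| := abs_add_le _ _
        _ = |Fj z| + t * |Gj z| := by rw [abs_mul, abs_of_pos ht0]
        _ ≤ CA * z ^ (α - 1/2 - (j:ℝ)) + t * (CG * z ^ (α - 7/2 - (j:ℝ))) :=
            add_le_add h1 (mul_le_mul_of_nonneg_left h2 ht0.le)
        _ = CA * z ^ (α - 1/2 - (j:ℝ)) + CG * (t * z ^ (α - 7/2 - (j:ℝ))) := by ring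
        _ ≤ CA * z ^ (α - 1/2 - (j:ℝ)) + CG * ((1/8) * z ^ (α - 1/2 - (j:ℝ))) :=
            add_le_add_right (mul_le_mul_of_nonneg_left h3 hCG0.le) _
        _ ≤ (CA + CG) * z ^ (α - 1/2 - (j:ℝ)) := by nlinarith
    have hb2int : ∀ z : ℝ, 2*τ < z → z ∈ Ioc (0:ℝ) 2 →
        |iteratedDeriv j ψ z| ≤ (CA + CG) * z ^ (α - 7/2 - (j:ℝ)) := by
      intro z hzτ hz2
      rw [hb2eq z hzτ]
      have : |0 * Fj z + 1 * Gj z| = |Gj z| := by norm_num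
      rw [this]
      refine le_trans (hCGb z hz2) ?_
      exact mul_le_mul_of_nonneg_right (by linarith) (Real.rpow_nonneg hz2.1.le _)
    -- smooth extensions on Ioi 0
    have hχcomp : ContDiff ℝ (j:ℕ) (fun w : ℝ => χ (t ^ (-(7*β/6)) * w)) :=
      (hχ.of_le (by exact_mod_cast le_top)).comp (contDiff_const.mul contDiff_id)
    have hχ'j : ContDiff ℝ (j:ℕ) (deriv χ) := by
      have h1 : ContDiff ℝ ((j:ℕ∞) + 1) χ := hχ.of_le (by exact_mod_cast le_top)
      have := (contDiff_succ_iff_deriv (n := (j:ℕ))).mp (by exact_mod_cast h1)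
      exact this.2.2
    have hχ'comp : ContDiff ℝ (j:ℕ) (fun w : ℝ => deriv χ (t ^ (-(7*β/6)) * w)) :=
      hχ'j.comp (contDiff_const.mul contDiff_id)
    have hAsm : ContDiffOn ℝ (j:ℕ) A (Ioi 0) := elem_contDiffOn hχR j hA
    have hG₁sm : ContDiffOn ℝ (j:ℕ) G₁ (Ioi 0) := elem_contDiffOn hχR j hG₁
    set Φ : ℝ → ℝ := fun w => A w + t * (χ (t ^ (-(7*β/6)) * w) * G₁ w) with hΦdef
    have hΦsm : ContDiffOn ℝ (j:ℕ) Φ (Ioi 0) :=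
      hAsm.add (contDiffOn_const.mul ((hχcomp.contDiffOn).mul hG₁sm))
    have hΘsΦ : ∀ z ∈ Ioi (0:ℝ), Θs t z = Φ z := by
      intro z hz
      rw [hΘs t ht0 z hz, hΘ₀A z hz, hΘ₁G₁ z hz, hΦdef]
      ring
    have hΨsm : ContDiffOn ℝ (j:ℕ) Ψ (Ioi 0) := by
      rw [hΨdef]
      apply ContDiffOn.mul _ hG₁sm
      apply ContDiffOn.add
      · exact (contDiff_const.mul hχcomp).contDiffOn
      · exact (contDiff_const.mul (hχ'comp.mul
          (contDiff_const.mul contDiff_id))).contDiffOn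
    -- boundary-inclusive bound
    have key : ∀ (h W : ℝ → ℝ) (C' e : ℝ), 0 ≤ C' →
        ContDiffOn ℝ (j:ℕ) W (Ioi 0) → (∀ z ∈ Ioi (0:ℝ), h z = W z) →
        (∀ z : ℝ, 2*τ < z → z ∈ Ioc (0:ℝ) 2 → |iteratedDeriv j h z| ≤ C' * z ^ e) →
        |iteratedDeriv j h x| ≤ C' * x ^ e := by
      intro h W C' e hC' hWsm hhW hbnd
      rcases lt_or_eq_of_le hxt with hlt | heqx
      · exact hbnd x hlt ⟨hx0, le_trans hx.2 (by linarith)⟩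
      · -- boundary case x = 2τ
        have hxIoi : x ∈ Ioi (0:ℝ) := hx0
        have hcontW : ContinuousOn (iteratedDerivWithin j W (Ioi 0)) (Ioi 0) :=
          hWsm.continuousOn_iteratedDerivWithin le_rfl (uniqueDiffOn_Ioi 0)
        have htrans := iteratedDeriv_eqOn_within hhW j
        have htend : Tendsto (fun z => |iteratedDeriv j h z|) (𝓝[>] x)
            (𝓝 |iteratedDeriv j h x|) := by
          have h1 : Tendsto (iteratedDerivWithin j W (Ioi 0)) (𝓝[Ioi 0] x)
              (𝓝 (iteratedDerivWithin j W (Ioi 0) x)) := hcontW x hxIoi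
          have h2 := h1.mono_left (nhdsWithin_mono x (Ioi_subset_Ioi hx0.le))
          have h3 : (fun z => iteratedDeriv j h z) =ᶠ[𝓝[>] x]
              (iteratedDerivWithin j W (Ioi 0)) := by
            filter_upwards [self_mem_nhdsWithin] with z hz
            exact htrans z (lt_trans hx0 hz)
          rw [htrans x hxIoi]
          exact (h2.congr' h3.symm).abs
        have htend2 : Tendsto (fun z => C' * z ^ e) (𝓝[>] x) (𝓝 (C' * x ^ e)) := by
          apply Tendsto.mono_left _ nhdsWithin_le_nhds
          exact (ContinuousAt.mul continuousAt_const
            (Real.continuousAt_rpow_const x e (Or.inl hx0.ne')))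
        have hev : ∀ᶠ z in 𝓝[>] x, |iteratedDeriv j h z| ≤ C' * z ^ e := by
          have h2m : Iio (2:ℝ) ∈ 𝓝[>] x :=
            nhdsWithin_le_nhds (Iio_mem_nhds (by linarith [hx.2]))
          filter_upwards [self_mem_nhdsWithin, h2m] with z hz1 hz2
          exact hbnd z (heqx ▸ hz1) ⟨lt_trans hx0 hz1, hz2.le⟩
        exact le_of_tendsto_of_tendsto htend htend2 hev
    constructor
    · exact key (Θs t) Φ (CA + CG) _ (by positivity) hΦsm hΘsΦ hb1int
    · exact key ψ Ψ (CA + CG) _ (by positivity) hΨsm hψΨ hb2int
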